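/- (Sorted downward closure property.) Let X and X' be nonempty itemsets with X' ⊆ X ⊆ I such that mu(i) ≤ mu(j) for every i ∈ X' and every j ∈ X \ X' (i.e., X' is a prefix of X when the items of X are sorted in ascending order of mu values). If X is an HTWUI, i.e., TWU(X) ≥ MIU(X), then X' is also an HTWUI, i.e., TWU(X') ≥ MIU(X'); moreover MIU(X') = MIU(X). -/
import Mathlib


open Finset

variable {ι τ : Type*}

/-- Utility of item `i` in transaction `t`: quantity times unit profit. -/
def itemU (pr : ι → ℝ) (q : ι → τ → ℕ) (i : ι) (t : τ) : ℝ :=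
  (q i t : ℝ) * pr i

/-- Utility of itemset `X` in transaction `t`. -/
def setU (pr : ι → ℝ) (q : ι → τ → ℕ) (X : Finset ι) (t : τ) : ℝ :=
  ∑ i ∈ X, itemU pr q i t

/-- Transaction utility of transaction `t` (with item set `Tr t`). -/
def tu (pr : ι → ℝ) (q : ι → τ → ℕ) (Tr : τ → Finset ι) (t : τ) : ℝ :=
  ∑ i ∈ Tr t, itemU pr q i t

/-- Transaction-weighted utility of itemset `X` in database `D`. -/
def TWU [DecidableEq ι] (pr : ι → ℝ) (q : ι → τ → ℕ) (Tr : τ → Finset ι)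
    (D : Finset τ) (X : Finset ι) : ℝ :=
  ∑ t ∈ D.filter (fun t => X ⊆ Tr t), tu pr q Tr t

/-- Utility of itemset `X` in database `D`. -/
def dbU [DecidableEq ι] (pr : ι → ℝ) (q : ι → τ → ℕ) (Tr : τ → Finset ι)
    (D : Finset τ) (X : Finset ι) : ℝ :=
  ∑ t ∈ D.filter (fun t => X ⊆ Tr t), setU pr q X t

/-- Minimum itemset utility of a nonempty itemset `X`. -/
def MIU (mu : ι → ℝ) (X : Finset ι) (hX : X.Nonempty) : ℝ :=
  X.inf' hX mu

/-- Remaining utility of itemset `X` in transaction `t`: total utility of the items of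
`Tr t` that come strictly after every item of `X`. -/
def ru [LinearOrder ι] (pr : ι → ℝ) (q : ι → τ → ℕ) (Tr : τ → Finset ι)
    (X : Finset ι) (t : τ) : ℝ :=
  ∑ i ∈ (Tr t).filter (fun i => ∀ x ∈ X, x < i), itemU pr q i t

/-- Sum of the remaining utilities of itemset `X` over the database `D` (`X.RU`). -/
def dbRU [LinearOrder ι] (pr : ι → ℝ) (q : ι → τ → ℕ) (Tr : τ → Finset ι)
    (D : Finset τ) (X : Finset ι) : ℝ :=
  ∑ t ∈ D.filter (fun t => X ⊆ Tr t), ru pr q Tr X t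

/-- sorted downward closure property. If `X'` is a prefix of `X` in ascending
order of `mu` values and `X` is an HTWUI, then `X'` is an HTWUI and `MIU(X') = MIU(X)`. -/
theorem sorted_downward_closure [DecidableEq ι] (I : Finset ι) (pr mu : ι → ℝ)
    (hpr : ∀ i, 0 ≤ pr i) (hmu : ∀ i, 0 < mu i)
    (D : Finset τ) (Tr : τ → Finset ι) (q : ι → τ → ℕ)
    (hq : ∀ t ∈ D, ∀ i ∈ Tr t, 0 < q i t) (hTr : ∀ t ∈ D, Tr t ⊆ I)
    (X X' : Finset ι) (hX : X.Nonempty) (hX' : X'.Nonempty)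
    (hsub : X' ⊆ X) (hXI : X ⊆ I)
    (hprefix : ∀ i ∈ X', ∀ j ∈ X \ X', mu i ≤ mu j)
    (hHTWUI : TWU pr q Tr D X ≥ MIU mu X hX) :
    TWU pr q Tr D X' ≥ MIU mu X' hX' ∧ MIU mu X' hX' = MIU mu X hX := by
  have hMIU : MIU mu X' hX' = MIU mu X hX := by
    apply le_antisymm
    · -- min over X' ≥ min over X, i.e. MIU X ≤ MIU X'... we need MIU X' ≤ MIU X? No:
      -- MIU X' ≤ MIU X: since every element of X is ≥ (in mu) some element of X'.
      rw [MIU, MIU, Finset.le_inf'_iff]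
      intro j hj
      by_cases hjX' : j ∈ X'
      · exact Finset.inf'_le mu hjX'
      · obtain ⟨i, hi⟩ := hX'
        exact le_trans (Finset.inf'_le mu hi) (hprefix i hi j (Finset.mem_sdiff.mpr ⟨hj, hjX'⟩))
    · rw [MIU, MIU, Finset.le_inf'_iff]
      intro i hi
      exact Finset.inf'_le mu (hsub hi)
  have hTWU : TWU pr q Tr D X ≤ TWU pr q Tr D X' := by
    apply Finset.sum_le_sum_of_subset_of_nonneg
    · intro t ht
      rw [Finset.mem_filter] at ht ⊢
      exact ⟨ht.1, hsub.trans ht.2⟩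
    · intro t ht _
      apply Finset.sum_nonneg
      intro i _
      exact mul_nonneg (Nat.cast_nonneg _) (hpr i)
  exact ⟨hMIU ▸ le_trans hHTWUI hTWU, hMIU⟩
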